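/- Let ω ⊂ ℝ² be a bounded domain and θ : closure(ω) → ℝ³ an injective C³ mapping with a_α := ∂_α θ linearly independent on closure(ω). With a₃ := (a₁ × a₂)/|a₁ × a₂|, (a^α) the contravariant tangent basis (a^α · a_β = δ^α_β), a^{αβ} := a^α · a^β, b_{αβ} := a₃ · ∂_β a_α, b^σ_α := a^{στ} b_{τα}, Γ^σ_{αβ} := a^σ · ∂_β a_α, and b^σ_{β|α} := ∂_α b^σ_β + Γ^σ_{ατ} b^τ_β − Γ^τ_{αβ} b^σ_τ, let η = (η₁, η₂, η₃) be a C² vector field on closure(ω) satisfying γ_{αβ}(η) := (1/2)(∂_β η_α + ∂_α η_β) − Γ^σ_{αβ} η_σ − b_{αβ} η₃ = 0 in ω. For ε > 0 and (y, x₃) ∈ ω × (−1, 1) define v_α(ε)(y, x₃) := η_α(y) − ε x₃ θ_α(y) with θ_α := ∂_α η₃ + 2 b^σ_α η_σ, and v₃(ε)(y, x₃) := η₃(y). Then at every point of ω × (−1,1): (1/ε) γ_{αβ}(v(ε)) + x₃ b^σ_{β|α} v_σ(ε) + x₃ b^σ_α b_{σβ} v₃(ε) = − x₃ ρ_{αβ}(η)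 − ε x₃² b^σ_{β|α} θ_σ, where ρ_{αβ}(η) := ∂_α∂_β η₃ − Γ^σ_{αβ} ∂_σ η₃ − b^σ_α b_{σβ} η₃ + b^σ_α (∂_β η_σ − Γ^τ_{βσ} η_τ) + b^τ_β (∂_α η_τ − Γ^σ_{ατ} η_σ) + b^τ_{β|α} η_τ, and γ_{αβ}(v(ε)) is computed by the same formula as γ_{αβ}(η) applied pointwise in y for each fixed x₃. -/

import Mathlib

open Set


private lemma fderiv_comp_apply3 (f : (Fin 2 → ℝ) → Fin 3 → ℝ) (z w : Fin 2 → ℝ) (m : Fin 3)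
    (hf : DifferentiableAt ℝ f z) :
    fderiv ℝ f z w m = fderiv ℝ (fun z => f z m) z w := by
  have h := fderiv_pi (𝕜 := ℝ) (φ := fun m z => f z m) (x := z)
    (fun m => differentiableAt_pi.mp hf m)
  calc fderiv ℝ f z w m = fderiv ℝ (fun x m => f x m) z w m := rfl
    _ = (ContinuousLinearMap.pi fun m => fderiv ℝ (fun z => f z m) z) w m := by rw [h]
    _ = fderiv ℝ (fun z => f z m) z w := rfl

private lemma fderiv_sum_mul {ι : Type*} (s : Finset ι) (f g : ι → (Fin 2 → ℝ) → ℝ)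
    (x w : Fin 2 → ℝ)
    (hf : ∀ i ∈ s, DifferentiableAt ℝ (f i) x) (hg : ∀ i ∈ s, DifferentiableAt ℝ (g i) x) :
    fderiv ℝ (fun z => ∑ i ∈ s, f i z * g i z) x w
      = ∑ i ∈ s, (fderiv ℝ (f i) x w * g i x + f i x * fderiv ℝ (g i) x w) := by
  rw [fderiv_fun_sum (fun i hi => ((hf i hi).fun_mul (hg i hi)))]
  rw [ContinuousLinearMap.sum_apply]
  refine Finset.sum_congr rfl fun i hi => ?_
  rw [fderiv_fun_mul (hf i hi) (hg i hi)]
  simp only [ContinuousLinearMap.add_apply, ContinuousLinearMap.smul_apply, smul_eq_mul]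
  ring

private lemma fderiv_fderiv_symm {F : Type*} [NormedAddCommGroup F] [NormedSpace ℝ F]
    {f : (Fin 2 → ℝ) → F} {x : (Fin 2 → ℝ)} {n : WithTop ℕ∞}
    (hf : ContDiffAt ℝ n f x) (hn : 2 ≤ n) (v w : Fin 2 → ℝ) :
    fderiv ℝ (fun z => fderiv ℝ f z v) x w = fderiv ℝ (fun z => fderiv ℝ f z w) x v := by
  have hs := hf.isSymmSndFDerivAt (by rw [minSmoothness_of_isRCLikeNormedField]; exact hn)
  have hd : DifferentiableAt ℝ (fderiv ℝ f) x := by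
    have h1 : ContDiffAt ℝ 1 (fderiv ℝ f) x := hf.fderiv_right (by exact_mod_cast hn)
    exact h1.differentiableAt one_ne_zero
  have key : ∀ u : Fin 2 → ℝ, fderiv ℝ (fun z => fderiv ℝ f z u) x
      = (fderiv ℝ (fderiv ℝ f) x).flip u := by
    intro u
    have := fderiv_clm_apply (c := fderiv ℝ f) (u := fun _ => u) hd (differentiableAt_const u)
    simpa using this
  rw [key v, key w]
  simp only [ContinuousLinearMap.flip_apply]
  exact hs w v

private lemma cross_orth_eq_zero (u v w : Fin 3 → ℝ)
    (h0 : u 0 * w 0 + u 1 * w 1 + u 2 * w 2 = 0)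
    (h1 : v 0 * w 0 + v 1 * w 1 + v 2 * w 2 = 0)
    (h2 : (u 1 * v 2 - u 2 * v 1) * w 0 + (u 2 * v 0 - u 0 * v 2) * w 1
        + (u 0 * v 1 - u 1 * v 0) * w 2 = 0)
    (hN : (u 1 * v 2 - u 2 * v 1) ^ 2 + (u 2 * v 0 - u 0 * v 2) ^ 2
        + (u 0 * v 1 - u 1 * v 0) ^ 2 ≠ 0) :
    ∀ i, w i = 0 := by
  have conc : ∀ x : ℝ, ((u 1 * v 2 - u 2 * v 1) ^ 2 + (u 2 * v 0 - u 0 * v 2) ^ 2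
      + (u 0 * v 1 - u 1 * v 0) ^ 2) * x = 0 → x = 0 := by
    intro x hx
    rcases mul_eq_zero.mp hx with h | h
    · exact absurd h hN
    · exact h
  have k0 : w 0 = 0 := by
    refine conc _ ?_
    linear_combination (u 1 * v 2 - u 2 * v 1) * h2
      + (-(u 2 * v 0 - u 0 * v 2) * v 2 + (u 0 * v 1 - u 1 * v 0) * v 1) * h0
      + ((u 2 * v 0 - u 0 * v 2) * u 2 - (u 0 * v 1 - u 1 * v 0) * u 1) * h1
  have k1 : w 1 = 0 := by
    refine conc _ ?_
    linear_combination (u 2 * v 0 - u 0 * v 2) * h2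
      + (-(u 0 * v 1 - u 1 * v 0) * v 0 + (u 1 * v 2 - u 2 * v 1) * v 2) * h0
      + ((u 0 * v 1 - u 1 * v 0) * u 0 - (u 1 * v 2 - u 2 * v 1) * u 2) * h1
  have k2 : w 2 = 0 := by
    refine conc _ ?_
    linear_combination (u 0 * v 1 - u 1 * v 0) * h2
      + (-(u 1 * v 2 - u 2 * v 1) * v 1 + (u 2 * v 0 - u 0 * v 2) * v 0) * h0
      + ((u 1 * v 2 - u 2 * v 1) * u 1 - (u 2 * v 0 - u 0 * v 2) * u 0) * h1
  intro i
  fin_cases i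
  exacts [k0, k1, k2]

private lemma cross_ne_zero_of_indep (u v : Fin 3 → ℝ) (h : LinearIndependent ℝ ![u, v]) :
    ¬ ((u 1 * v 2 - u 2 * v 1 = 0) ∧ (u 2 * v 0 - u 0 * v 2 = 0)
        ∧ (u 0 * v 1 - u 1 * v 0 = 0)) := by
  rintro ⟨e0, e1, e2⟩
  rw [linearIndependent_fin2] at h
  obtain ⟨hv, hu⟩ := h
  simp only [Matrix.cons_val_one, Matrix.head_cons, Matrix.cons_val_zero] at hv hu
  have hvc : ∃ j, v j ≠ 0 := by
    by_contra hj
    push_neg at hj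
    exact hv (funext fun j => hj j)
  obtain ⟨j, hj⟩ := hvc
  have hvv : (0:ℝ) < v 0 ^ 2 + v 1 ^ 2 + v 2 ^ 2 := by
    have h1 : v j ^ 2 ≤ ∑ i, v i ^ 2 :=
      Finset.single_le_sum (fun i _ => sq_nonneg (v i)) (Finset.mem_univ j)
    have h2 : (0:ℝ) < v j ^ 2 := by positivity
    have h3 : ∑ i, v i ^ 2 = v 0 ^ 2 + v 1 ^ 2 + v 2 ^ 2 := by
      rw [Fin.sum_univ_three]
    linarith
  refine hu ((u 0 * v 0 + u 1 * v 1 + u 2 * v 2) / (v 0 ^ 2 + v 1 ^ 2 + v 2 ^ 2)) ?_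
  funext i
  have k0 : (v 0 ^ 2 + v 1 ^ 2 + v 2 ^ 2) * u 0 = (u 0 * v 0 + u 1 * v 1 + u 2 * v 2) * v 0 := by
    linear_combination v 1 * e2 - v 2 * e1
  have k1 : (v 0 ^ 2 + v 1 ^ 2 + v 2 ^ 2) * u 1 = (u 0 * v 0 + u 1 * v 1 + u 2 * v 2) * v 1 := by
    linear_combination -(v 0) * e2 + v 2 * e0
  have k2 : (v 0 ^ 2 + v 1 ^ 2 + v 2 ^ 2) * u 2 = (u 0 * v 0 + u 1 * v 1 + u 2 * v 2) * v 2 := by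
    linear_combination v 0 * e1 - v 1 * e0
  have hkey : (v 0 ^ 2 + v 1 ^ 2 + v 2 ^ 2) * u i = (u 0 * v 0 + u 1 * v 1 + u 2 * v 2) * v i := by
    fin_cases i
    exacts [k0, k1, k2]
  simp only [Pi.smul_apply, smul_eq_mul]
  field_simp
  linear_combination (-1 : ℝ) * hkey


/-- Scaled strain identity for the Miara–Sanchez-Palencia test functions associated with
an inextensional displacement `η` of the middle surface:
`(1/ε) γ_{αβ}(v(ε)) + x₃ b^σ_{β|α} v_σ(ε) + x₃ b^σ_α b_{σβ} v₃(ε)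
  = − x₃ ρ_{αβ}(η) − ε x₃² b^σ_{β|α} θ_σ`. -/
theorem stmt17 (ω : Set (Fin 2 → ℝ)) (hωo : IsOpen ω) (hωb : Bornology.IsBounded ω)
    (hωc : IsConnected ω)
    (U : Set (Fin 2 → ℝ)) (hUo : IsOpen U) (hωU : closure ω ⊆ U)
    (θ : (Fin 2 → ℝ) → Fin 3 → ℝ) (hθ : ContDiffOn ℝ 3 θ U) (hθinj : InjOn θ (closure ω))
    (a : Fin 2 → (Fin 2 → ℝ) → Fin 3 → ℝ)
    (ha : ∀ α y, a α y = fderiv ℝ θ y (Pi.single α 1))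
    (hind : ∀ y ∈ closure ω, LinearIndependent ℝ ![a 0 y, a 1 y])
    (c : (Fin 2 → ℝ) → Fin 3 → ℝ)
    (hc : ∀ y, c y = ![a 0 y 1 * a 1 y 2 - a 0 y 2 * a 1 y 1,
                       a 0 y 2 * a 1 y 0 - a 0 y 0 * a 1 y 2,
                       a 0 y 0 * a 1 y 1 - a 0 y 1 * a 1 y 0])
    (a3 : (Fin 2 → ℝ) → Fin 3 → ℝ)
    (ha3 : ∀ y, a3 y = (Real.sqrt (∑ i, c y i ^ 2))⁻¹ • c y)
    (amat : (Fin 2 → ℝ) → Matrix (Fin 2) (Fin 2) ℝ)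
    (hamat : ∀ y α β, amat y α β = ∑ m, a α y m * a β y m)
    (acon : Fin 2 → (Fin 2 → ℝ) → Fin 3 → ℝ)
    (hacon : ∀ σ y, acon σ y = ∑ τ, (amat y)⁻¹ σ τ • a τ y)
    (ainv : (Fin 2 → ℝ) → Fin 2 → Fin 2 → ℝ)
    (hainv : ∀ y α β, ainv y α β = ∑ m, acon α y m * acon β y m)
    (bcov : (Fin 2 → ℝ) → Fin 2 → Fin 2 → ℝ)
    (hbcov : ∀ y α β, bcov y α β = ∑ m, a3 y m * fderiv ℝ (a α) y (Pi.single β 1) m)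
    (bmix : (Fin 2 → ℝ) → Fin 2 → Fin 2 → ℝ)
    (hbmix : ∀ y σ α, bmix y σ α = ∑ τ, ainv y σ τ * bcov y τ α)
    (Gam2 : (Fin 2 → ℝ) → Fin 2 → Fin 2 → Fin 2 → ℝ)
    (hGam2 : ∀ y σ α β, Gam2 y σ α β = ∑ m, acon σ y m * fderiv ℝ (a α) y (Pi.single β 1) m)
    (bder : (Fin 2 → ℝ) → Fin 2 → Fin 2 → Fin 2 → ℝ)
    (hbder : ∀ y σ β α, bder y σ β α = fderiv ℝ (fun z => bmix z σ β) y (Pi.single α 1)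
      + (∑ τ, Gam2 y σ α τ * bmix y τ β) - ∑ τ, Gam2 y τ α β * bmix y σ τ)
    (ηh : Fin 2 → (Fin 2 → ℝ) → ℝ) (η3 : (Fin 2 → ℝ) → ℝ)
    (hηh : ∀ α, ContDiffOn ℝ 2 (ηh α) (closure ω)) (hη3 : ContDiffOn ℝ 2 η3 (closure ω))
    (γη : (Fin 2 → ℝ) → Fin 2 → Fin 2 → ℝ)
    (hγη : ∀ y α β, γη y α β = (1 / 2) * (fderiv ℝ (ηh α) y (Pi.single β 1)
        + fderiv ℝ (ηh β) y (Pi.single α 1))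
      - (∑ σ, Gam2 y σ α β * ηh σ y) - bcov y α β * η3 y)
    (hγ0 : ∀ y ∈ ω, ∀ α β : Fin 2, γη y α β = 0)
    (θv : Fin 2 → (Fin 2 → ℝ) → ℝ)
    (hθv : ∀ α y, θv α y = fderiv ℝ η3 y (Pi.single α 1) + 2 * ∑ σ, bmix y σ α * ηh σ y)
    (vh : ℝ → ℝ → Fin 2 → (Fin 2 → ℝ) → ℝ)
    (hvh : ∀ ε x₃ α y, vh ε x₃ α y = ηh α y - ε * x₃ * θv α y)
    (ρη : (Fin 2 → ℝ) → Fin 2 → Fin 2 → ℝ)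
    (hρη : ∀ y α β, ρη y α β =
      fderiv ℝ (fun z => fderiv ℝ η3 z (Pi.single β 1)) y (Pi.single α 1)
      - (∑ σ, Gam2 y σ α β * fderiv ℝ η3 y (Pi.single σ 1))
      - (∑ σ, bmix y σ α * bcov y σ β) * η3 y
      + (∑ σ, bmix y σ α * (fderiv ℝ (ηh σ) y (Pi.single β 1) - ∑ τ, Gam2 y τ β σ * ηh τ y))
      + (∑ τ, bmix y τ β * (fderiv ℝ (ηh τ) y (Pi.single α 1) - ∑ σ, Gam2 y σ α τ * ηh σ y))
      + ∑ τ, bder y τ β α * ηh τ y)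
    (γv : ℝ → ℝ → (Fin 2 → ℝ) → Fin 2 → Fin 2 → ℝ)
    (hγv : ∀ ε x₃ y α β, γv ε x₃ y α β = (1 / 2) * (fderiv ℝ (vh ε x₃ α) y (Pi.single β 1)
        + fderiv ℝ (vh ε x₃ β) y (Pi.single α 1))
      - (∑ σ, Gam2 y σ α β * vh ε x₃ σ y) - bcov y α β * η3 y) :
    ∀ ε : ℝ, 0 < ε → ∀ y ∈ ω, ∀ x₃ ∈ Ioo (-1 : ℝ) 1, ∀ α β : Fin 2,
      (1 / ε) * γv ε x₃ y α β + x₃ * (∑ σ, bder y σ β α * vh ε x₃ σ y)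
        + x₃ * (∑ σ, bmix y σ α * bcov y σ β) * η3 y
      = -x₃ * ρη y α β - ε * x₃ ^ 2 * ∑ σ, bder y σ β α * θv σ y := by
  intro ε hε y hy x₃ _ α β
  have hyc : y ∈ closure ω := subset_closure hy
  have hyU : y ∈ U := hωU hyc
  -- ### Section 1 : smoothness of a on U
  have haC : ∀ σ : Fin 2, ContDiffOn ℝ 2 (a σ) U := by
    intro σ
    have h1 : ContDiffOn ℝ 2 (fderiv ℝ θ) U := hθ.fderiv_of_isOpen hUo (by norm_num)
    have h2 : ContDiffOn ℝ 2 (fun z => fderiv ℝ θ z (Pi.single σ 1)) U :=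
      h1.clm_apply contDiffOn_const
    exact h2.congr (fun z _ => ha σ z)
  have haCm : ∀ (σ : Fin 2) (m : Fin 3), ContDiffOn ℝ 2 (fun z => a σ z m) U := fun σ m =>
    (ContinuousLinearMap.proj m : ((Fin 3 → ℝ)) →L[ℝ] ℝ).contDiff.comp_contDiffOn (haC σ)
  have haD : ∀ (σ : Fin 2), ∀ z ∈ U, DifferentiableAt ℝ (a σ) z := fun σ z hz =>
    ((haC σ).differentiableOn two_ne_zero).differentiableAt (hUo.mem_nhds hz)
  have haDm : ∀ (σ : Fin 2) (m : Fin 3), ∀ z ∈ U, DifferentiableAt ℝ (fun z' => a σ z' m) z :=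
    fun σ m z hz =>
    (((haCm σ m).differentiableOn two_ne_zero).differentiableAt (hUo.mem_nhds hz))
  -- c components
  have hc0 : ∀ z, c z 0 = a 0 z 1 * a 1 z 2 - a 0 z 2 * a 1 z 1 := fun z => by rw [hc]; rfl
  have hc1 : ∀ z, c z 1 = a 0 z 2 * a 1 z 0 - a 0 z 0 * a 1 z 2 := fun z => by rw [hc]; rfl
  have hc2 : ∀ z, c z 2 = a 0 z 0 * a 1 z 1 - a 0 z 1 * a 1 z 0 := fun z => by rw [hc]; rfl
  -- N
  set Nf : (Fin 2 → ℝ) → ℝ := fun z => ∑ i, c z i ^ 2 with hNfdef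
  have hNf : ∀ z, Nf z = (a 0 z 1 * a 1 z 2 - a 0 z 2 * a 1 z 1) ^ 2
      + (a 0 z 2 * a 1 z 0 - a 0 z 0 * a 1 z 2) ^ 2
      + (a 0 z 0 * a 1 z 1 - a 0 z 1 * a 1 z 0) ^ 2 := by
    intro z
    simp only [hNfdef, Fin.sum_univ_three, hc0 z, hc1 z, hc2 z]
  have hNC : ContDiffOn ℝ 2 Nf U := by
    have : ContDiffOn ℝ 2 (fun z => (a 0 z 1 * a 1 z 2 - a 0 z 2 * a 1 z 1) ^ 2
        + (a 0 z 2 * a 1 z 0 - a 0 z 0 * a 1 z 2) ^ 2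
        + (a 0 z 0 * a 1 z 1 - a 0 z 1 * a 1 z 0) ^ 2) U := by
      refine ContDiffOn.add (ContDiffOn.add ?_ ?_) ?_ <;>
        exact (ContDiffOn.sub ((haCm _ _).mul (haCm _ _)) ((haCm _ _).mul (haCm _ _))).pow 2
    exact this.congr (fun z _ => hNf z)
  have hNy : 0 < Nf y := by
    have hcross := cross_ne_zero_of_indep (a 0 y) (a 1 y) (hind y hyc)
    have h3 : Nf y = (c y 0) ^ 2 + (c y 1) ^ 2 + (c y 2) ^ 2 := Fin.sum_univ_three _
    rcases lt_or_eq_of_le (by positivity : (0:ℝ) ≤ (c y 0) ^ 2 + (c y 1) ^ 2 + (c y 2) ^ 2) with h | h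
    · rw [h3]; exact h
    · exfalso
      apply hcross
      refine ⟨?_, ?_, ?_⟩
      · rw [← hc0]; nlinarith [sq_nonneg (c y 0), sq_nonneg (c y 1), sq_nonneg (c y 2)]
      · rw [← hc1]; nlinarith [sq_nonneg (c y 0), sq_nonneg (c y 1), sq_nonneg (c y 2)]
      · rw [← hc2]; nlinarith [sq_nonneg (c y 0), sq_nonneg (c y 1), sq_nonneg (c y 2)]
  -- ### Section 2 : the neighbourhood V
  set V : Set (Fin 2 → ℝ) := ω ∩ (U ∩ Nf ⁻¹' Ioi 0) with hVdef
  have hVo : IsOpen V := hωo.inter (hNC.continuousOn.isOpen_inter_preimage hUo isOpen_Ioi)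
  have hyV : y ∈ V := ⟨hy, hyU, hNy⟩
  have hVU : V ⊆ U := fun z hz => hz.2.1
  have hVN : ∀ z ∈ V, 0 < Nf z := fun z hz => hz.2.2
  -- ### Section 3 : pointwise identities on V
  have ha3m : ∀ z m, a3 z m = (Real.sqrt (Nf z))⁻¹ * c z m := by
    intro z m; rw [ha3]; rfl
  have hsqrt_pos : ∀ z ∈ V, 0 < Real.sqrt (Nf z) := fun z hz => Real.sqrt_pos.mpr (hVN z hz)
  have fin2cases : ∀ σ : Fin 2, σ = 0 ∨ σ = 1 := by decide
  have hdet : ∀ z, (amat z).det = Nf z := by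
    intro z
    rw [Matrix.det_fin_two, hamat, hamat, hamat, hamat, hNf z]
    simp only [Fin.sum_univ_three]
    ring
  have hdet0 : ∀ z ∈ V, (amat z).det ≠ 0 := fun z hz => by rw [hdet]; exact ne_of_gt (hVN z hz)
  have hunit : ∀ z ∈ V, IsUnit (amat z).det := fun z hz => (Ne.isUnit (hdet0 z hz))
  have haconm : ∀ σ z m, acon σ z m = ∑ ρ, (amat z)⁻¹ σ ρ * a ρ z m := by
    intro σ z m
    rw [hacon]
    simp [Finset.sum_apply, Pi.smul_apply, smul_eq_mul]
  have hP5 : ∀ z ∈ V, ∀ σ τ : Fin 2, (∑ m, acon σ z m * a τ z m) = if σ = τ then 1 else 0 := by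
    intro z hz σ τ
    have e1 : (∑ m, acon σ z m * a τ z m)
        = ∑ m, ∑ ρ, (amat z)⁻¹ σ ρ * (a ρ z m * a τ z m) := by
      refine Finset.sum_congr rfl fun m _ => ?_
      rw [haconm σ z m, Finset.sum_mul]
      exact Finset.sum_congr rfl fun ρ _ => by ring
    rw [e1, Finset.sum_comm]
    have e2 : ∀ ρ : Fin 2, (∑ m, (amat z)⁻¹ σ ρ * (a ρ z m * a τ z m))
        = (amat z)⁻¹ σ ρ * amat z ρ τ := by
      intro ρ; rw [← Finset.mul_sum, hamat]
    simp_rw [e2]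
    rw [← Matrix.mul_apply, Matrix.nonsing_inv_mul _ (hunit z hz), Matrix.one_apply]
  have hP6 : ∀ z ∈ V, ∀ (σ : Fin 2) (m : Fin 3), a σ z m = ∑ ρ, amat z σ ρ * acon ρ z m := by
    intro z hz σ m
    have e1 : (∑ ρ, amat z σ ρ * acon ρ z m)
        = ∑ ρ, ∑ μ, amat z σ ρ * (amat z)⁻¹ ρ μ * a μ z m := by
      refine Finset.sum_congr rfl fun ρ _ => ?_
      rw [haconm ρ z m, Finset.mul_sum]
      exact Finset.sum_congr rfl fun μ _ => by ring
    rw [e1, Finset.sum_comm]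
    have e2 : ∀ μ : Fin 2, (∑ ρ, amat z σ ρ * (amat z)⁻¹ ρ μ * a μ z m)
        = (amat z * (amat z)⁻¹) σ μ * a μ z m := by
      intro μ; rw [← Finset.sum_mul, ← Matrix.mul_apply]
    simp_rw [e2, Matrix.mul_nonsing_inv _ (hunit z hz), Matrix.one_apply]
    simp
  have hca : ∀ z (σ : Fin 2), (∑ m, c z m * a σ z m) = 0 := by
    intro z σ
    rcases fin2cases σ with rfl | rfl <;>
      · simp only [Fin.sum_univ_three, hc0 z, hc1 z, hc2 z]
        ring
  have hP3 : ∀ z ∈ V, ∀ σ : Fin 2, (∑ m, a3 z m * a σ z m) = 0 := by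
    intro z hz σ
    have e1 : (∑ m, a3 z m * a σ z m) = (Real.sqrt (Nf z))⁻¹ * ∑ m, c z m * a σ z m := by
      rw [Finset.mul_sum]
      exact Finset.sum_congr rfl fun m _ => by rw [ha3m]; ring
    rw [e1, hca, mul_zero]
  have hP4 : ∀ z ∈ V, (∑ m, a3 z m * a3 z m) = 1 := by
    intro z hz
    have e1 : (∑ m, a3 z m * a3 z m) = ((Real.sqrt (Nf z))⁻¹) ^ 2 * Nf z := by
      rw [Finset.mul_sum]
      exact Finset.sum_congr rfl fun m _ => by simp only [ha3m]; ring
    rw [e1, inv_pow, Real.sq_sqrt (le_of_lt (hVN z hz))]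
    exact inv_mul_cancel₀ (ne_of_gt (hVN z hz))
  have hP7 : ∀ z ∈ V, ∀ σ τ : Fin 2, ainv z σ τ = (amat z)⁻¹ σ τ := by
    intro z hz σ τ
    have hsymm : (amat z)⁻¹ τ σ = (amat z)⁻¹ σ τ := by
      have h1 : Matrix.transpose (amat z) = amat z := by
        ext i j
        rw [Matrix.transpose_apply, hamat, hamat]
        exact Finset.sum_congr rfl fun m _ => mul_comm _ _
      have h2 := Matrix.transpose_nonsing_inv (amat z)
      rw [h1] at h2
      calc (amat z)⁻¹ τ σ = (Matrix.transpose ((amat z)⁻¹)) σ τ := rfl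
        _ = (amat z)⁻¹ σ τ := by rw [h2]
    rw [hainv]
    have e1 : (∑ m, acon σ z m * acon τ z m)
        = ∑ m, ∑ ρ, (amat z)⁻¹ τ ρ * (acon σ z m * a ρ z m) := by
      refine Finset.sum_congr rfl fun m _ => ?_
      rw [haconm τ z m, Finset.mul_sum]
      exact Finset.sum_congr rfl fun ρ _ => by ring
    rw [e1, Finset.sum_comm]
    have e2 : ∀ ρ : Fin 2, (∑ m, (amat z)⁻¹ τ ρ * (acon σ z m * a ρ z m))
        = (amat z)⁻¹ τ ρ * (if σ = ρ then 1 else 0) := by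
      intro ρ; rw [← Finset.mul_sum, hP5 z hz]
    simp_rw [e2]
    simp only [mul_ite, mul_one, mul_zero, Finset.sum_ite_eq, Finset.mem_univ, if_true]
    exact hsymm
  have hP8 : ∀ z ∈ V, ∀ τ β2 : Fin 2, (∑ σ, amat z τ σ * bmix z σ β2) = bcov z τ β2 := by
    intro z hz τ β2
    have e1 : (∑ σ, amat z τ σ * bmix z σ β2)
        = ∑ σ, ∑ ρ, amat z τ σ * ainv z σ ρ * bcov z ρ β2 := by
      refine Finset.sum_congr rfl fun σ _ => ?_
      rw [hbmix, Finset.mul_sum]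
      exact Finset.sum_congr rfl fun ρ _ => by ring
    rw [e1, Finset.sum_comm]
    have e2 : ∀ ρ : Fin 2, (∑ σ, amat z τ σ * ainv z σ ρ * bcov z ρ β2)
        = (if τ = ρ then 1 else 0) * bcov z ρ β2 := by
      intro ρ
      rw [← Finset.sum_mul]
      congr 1
      have : ∀ σ : Fin 2, amat z τ σ * ainv z σ ρ = amat z τ σ * (amat z)⁻¹ σ ρ := fun σ => by
        rw [hP7 z hz]
      simp_rw [this]
      rw [← Matrix.mul_apply, Matrix.mul_nonsing_inv _ (hunit z hz), Matrix.one_apply]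
    simp_rw [e2]
    simp
  -- ### Section 4 : smoothness of a3, acon, bmix near y
  have fin3cases : ∀ m : Fin 3, m = 0 ∨ m = 1 ∨ m = 2 := by decide
  have hcCm : ∀ m : Fin 3, ContDiffOn ℝ 2 (fun z => c z m) U := by
    intro m
    have h0' : ContDiffOn ℝ 2 (fun z => a 0 z 1 * a 1 z 2 - a 0 z 2 * a 1 z 1) U :=
      ((haCm 0 1).mul (haCm 1 2)).sub ((haCm 0 2).mul (haCm 1 1))
    have h1' : ContDiffOn ℝ 2 (fun z => a 0 z 2 * a 1 z 0 - a 0 z 0 * a 1 z 2) U :=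
      ((haCm 0 2).mul (haCm 1 0)).sub ((haCm 0 0).mul (haCm 1 2))
    have h2' : ContDiffOn ℝ 2 (fun z => a 0 z 0 * a 1 z 1 - a 0 z 1 * a 1 z 0) U :=
      ((haCm 0 0).mul (haCm 1 1)).sub ((haCm 0 1).mul (haCm 1 0))
    rcases fin3cases m with rfl | rfl | rfl
    · exact h0'.congr (fun z _ => hc0 z)
    · exact h1'.congr (fun z _ => hc1 z)
    · exact h2'.congr (fun z _ => hc2 z)
  have ha3Cm : ∀ m : Fin 3, ContDiffOn ℝ 2 (fun z => a3 z m) V := by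
    intro m
    have hs : ContDiffOn ℝ 2 (fun z => (Real.sqrt (Nf z))⁻¹) V := by
      intro z hz
      have h1 : ContDiffAt ℝ 2 Nf z := hNC.contDiffAt (hUo.mem_nhds (hVU hz))
      have h2 : ContDiffAt ℝ 2 (fun z => Real.sqrt (Nf z)) z :=
        (Real.contDiffAt_sqrt (ne_of_gt (hVN z hz))).comp z h1
      exact (h2.inv (ne_of_gt (hsqrt_pos z hz))).contDiffWithinAt
    exact (hs.mul ((hcCm m).mono hVU)).congr (fun z _ => ha3m z m)
  have ha3Dm : ∀ (m : Fin 3), ∀ z ∈ V, DifferentiableAt ℝ (fun z' => a3 z' m) z := fun m z hz =>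
    ((ha3Cm m).differentiableOn two_ne_zero).differentiableAt (hVo.mem_nhds hz)
  have ha3D : ∀ z ∈ V, DifferentiableAt ℝ a3 z := by
    intro z hz
    exact differentiableAt_pi.mpr (fun m => ha3Dm m z hz)
  set D3c : Fin 2 → Fin 3 → (Fin 2 → ℝ) → ℝ :=
    fun b m z => fderiv ℝ (fun w => a3 w m) z (Pi.single b 1) with hD3cdef
  set Ad : Fin 2 → Fin 2 → Fin 3 → (Fin 2 → ℝ) → ℝ :=
    fun σ b m z => fderiv ℝ (fun w => a σ w m) z (Pi.single b 1) with hAddef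
  have hfda : ∀ (σ b : Fin 2) (m : Fin 3), ∀ z ∈ U,
      fderiv ℝ (a σ) z (Pi.single b 1) m = Ad σ b m z := fun σ b m z hz =>
    fderiv_comp_apply3 (a σ) z _ m (haD σ z hz)
  have hbcovc : ∀ z ∈ V, ∀ σ b : Fin 2, bcov z σ b = ∑ m, a3 z m * Ad σ b m z := by
    intro z hz σ b
    rw [hbcov]
    exact Finset.sum_congr rfl fun m _ => by rw [hfda σ b m z (hVU hz)]
  have hGam2c : ∀ z ∈ V, ∀ τ σ b : Fin 2, Gam2 z τ σ b = ∑ m, acon τ z m * Ad σ b m z := by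
    intro z hz τ σ b
    rw [hGam2]
    exact Finset.sum_congr rfl fun m _ => by rw [hfda σ b m z (hVU hz)]
  have hamatD : ∀ σ τ : Fin 2, ∀ z ∈ U, DifferentiableAt ℝ (fun z' => amat z' σ τ) z := by
    intro σ τ z hz
    have he : (fun z' => amat z' σ τ) = fun z' => ∑ m, a σ z' m * a τ z' m :=
      funext fun z' => hamat z' σ τ
    rw [he]
    exact DifferentiableAt.fun_sum (fun m _ => (haDm σ m z hz).mul (haDm τ m z hz))
  have hNfD : ∀ z ∈ U, DifferentiableAt ℝ Nf z := fun z hz =>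
    (hNC.differentiableOn two_ne_zero).differentiableAt (hUo.mem_nhds hz)
  have hinv_exp : ∀ z ∈ V, ∀ σ τ : Fin 2,
      (amat z)⁻¹ σ τ = (Nf z)⁻¹ * Matrix.adjugate (amat z) σ τ := by
    intro z hz σ τ
    rw [Matrix.inv_def, hdet z, Matrix.smul_apply, smul_eq_mul, Ring.inverse_eq_inv']
  have hinvD : ∀ σ τ : Fin 2, DifferentiableAt ℝ (fun z => (amat z)⁻¹ σ τ) y := by
    intro σ τ
    have hev : (fun z => (amat z)⁻¹ σ τ)
        =ᶠ[nhds y] (fun z => (Nf z)⁻¹ * Matrix.adjugate (amat z) σ τ) :=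
      Filter.eventuallyEq_of_mem (hVo.mem_nhds hyV) (fun w hw => hinv_exp w hw σ τ)
    rw [hev.differentiableAt_iff]
    refine DifferentiableAt.mul ((hNfD y hyU).inv (ne_of_gt hNy)) ?_
    rcases fin2cases σ with rfl | rfl <;> rcases fin2cases τ with rfl | rfl
    · have he : (fun z => Matrix.adjugate (amat z) 0 0) = fun z => amat z 1 1 := by
        funext z; rw [Matrix.adjugate_fin_two]; simp
      rw [he]; exact hamatD 1 1 y hyU
    · have he : (fun z => Matrix.adjugate (amat z) 0 1) = fun z => -(amat z 0 1) := by
        funext z; rw [Matrix.adjugate_fin_two]; simp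
      rw [he]; exact (hamatD 0 1 y hyU).neg
    · have he : (fun z => Matrix.adjugate (amat z) 1 0) = fun z => -(amat z 1 0) := by
        funext z; rw [Matrix.adjugate_fin_two]; simp
      rw [he]; exact (hamatD 1 0 y hyU).neg
    · have he : (fun z => Matrix.adjugate (amat z) 1 1) = fun z => amat z 0 0 := by
        funext z; rw [Matrix.adjugate_fin_two]; simp
      rw [he]; exact hamatD 0 0 y hyU
  have haconD : ∀ (τ : Fin 2) (m : Fin 3), DifferentiableAt ℝ (fun z => acon τ z m) y := by
    intro τ m
    have he : (fun z => acon τ z m) = fun z => ∑ ρ, (amat z)⁻¹ τ ρ * a ρ z m :=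
      funext fun z => haconm τ z m
    rw [he]
    exact DifferentiableAt.fun_sum fun ρ _ => (hinvD τ ρ).mul (haDm ρ m y hyU)
  have hD3cD : ∀ (b : Fin 2) (m : Fin 3), DifferentiableAt ℝ (fun z => D3c b m z) y := by
    intro b m
    have h1 : ContDiffOn ℝ 1 (fderiv ℝ (fun w => a3 w m)) V :=
      (ha3Cm m).fderiv_of_isOpen hVo (by norm_num)
    have h2 : DifferentiableAt ℝ (fderiv ℝ (fun w => a3 w m)) y :=
      (h1.differentiableOn one_ne_zero).differentiableAt (hVo.mem_nhds hyV)
    exact h2.clm_apply (differentiableAt_const _)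
  -- ### Section 5 : derivative identities and Codazzi
  have hDa : ∀ z ∈ V, ∀ σ b : Fin 2, (∑ m, D3c b m z * a σ z m) = - bcov z σ b := by
    intro z hz σ b
    have hconst : (fun z' => ∑ m, a3 z' m * a σ z' m) =ᶠ[nhds z] (fun _ => (0:ℝ)) :=
      Filter.eventuallyEq_of_mem (hVo.mem_nhds hz) (fun w hw => hP3 w hw σ)
    have h0 : fderiv ℝ (fun z' => ∑ m, a3 z' m * a σ z' m) z (Pi.single b 1) = 0 := by
      rw [hconst.fderiv_eq]; simp
    have h1 : fderiv ℝ (fun z' => ∑ m, a3 z' m * a σ z' m) z (Pi.single b 1)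
        = ∑ m, (D3c b m z * a σ z m + a3 z m * Ad σ b m z) :=
      fderiv_sum_mul Finset.univ (fun m z' => a3 z' m) (fun m z' => a σ z' m) z (Pi.single b 1)
        (fun m _ => ha3Dm m z hz) (fun m _ => haDm σ m z (hVU hz))
    rw [h1, Finset.sum_add_distrib] at h0
    have h2 : bcov z σ b = ∑ m, a3 z m * Ad σ b m z := hbcovc z hz σ b
    linarith
  have hDa3 : ∀ z ∈ V, ∀ b : Fin 2, (∑ m, a3 z m * D3c b m z) = 0 := by
    intro z hz b
    have hconst : (fun z' => ∑ m, a3 z' m * a3 z' m) =ᶠ[nhds z] (fun _ => (1:ℝ)) :=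
      Filter.eventuallyEq_of_mem (hVo.mem_nhds hz) (fun w hw => hP4 w hw)
    have h0 : fderiv ℝ (fun z' => ∑ m, a3 z' m * a3 z' m) z (Pi.single b 1) = 0 := by
      rw [hconst.fderiv_eq]; simp
    have h1 : fderiv ℝ (fun z' => ∑ m, a3 z' m * a3 z' m) z (Pi.single b 1)
        = ∑ m, (D3c b m z * a3 z m + a3 z m * D3c b m z) :=
      fderiv_sum_mul Finset.univ (fun m z' => a3 z' m) (fun m z' => a3 z' m) z (Pi.single b 1)
        (fun m _ => ha3Dm m z hz) (fun m _ => ha3Dm m z hz)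
    rw [h1, Finset.sum_add_distrib] at h0
    have h2 : (∑ m, D3c b m z * a3 z m) = ∑ m, a3 z m * D3c b m z :=
      Finset.sum_congr rfl fun m _ => mul_comm _ _
    linarith
  have hacon_D3 : ∀ z ∈ V, ∀ τ b : Fin 2, (∑ m, acon τ z m * D3c b m z) = - bmix z τ b := by
    intro z hz τ b
    have e1 : (∑ m, acon τ z m * D3c b m z)
        = ∑ m, ∑ ρ, (amat z)⁻¹ τ ρ * (a ρ z m * D3c b m z) := by
      refine Finset.sum_congr rfl fun m _ => ?_
      rw [haconm τ z m, Finset.sum_mul]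
      exact Finset.sum_congr rfl fun ρ _ => by ring
    rw [e1, Finset.sum_comm]
    have e2 : ∀ ρ : Fin 2, (∑ m, (amat z)⁻¹ τ ρ * (a ρ z m * D3c b m z))
        = (amat z)⁻¹ τ ρ * (- bcov z ρ b) := by
      intro ρ
      rw [← Finset.mul_sum]
      congr 1
      rw [← hDa z hz ρ b]
      exact Finset.sum_congr rfl fun m _ => mul_comm _ _
    simp_rw [e2]
    rw [hbmix]
    rw [← Finset.sum_neg_distrib]
    refine Finset.sum_congr rfl fun ρ _ => ?_
    rw [hP7 z hz]
    ring
  have hbmix_eq : ∀ τ b : Fin 2, ∀ z ∈ V, bmix z τ b = -∑ m, acon τ z m * D3c b m z := by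
    intro τ b z hz
    rw [hacon_D3 z hz τ b, neg_neg]
  have hWein : ∀ (b : Fin 2) (m : Fin 3), D3c b m y = -∑ σ, bmix y σ b * a σ y m := by
    intro b
    set w : Fin 3 → ℝ := fun m => D3c b m y + ∑ σ, bmix y σ b * a σ y m with hwdef
    have hwa : ∀ τ : Fin 2, (∑ m, a τ y m * w m) = 0 := by
      intro τ
      have h1 : (∑ m, a τ y m * D3c b m y) = - bcov y τ b := by
        rw [← hDa y hyV τ b]
        exact Finset.sum_congr rfl fun m _ => mul_comm _ _
      have h2 : (∑ m, a τ y m * (∑ σ, bmix y σ b * a σ y m)) = bcov y τ b := by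
        have e1 : (∑ m, a τ y m * (∑ σ, bmix y σ b * a σ y m))
            = ∑ m, ∑ σ, bmix y σ b * (a τ y m * a σ y m) := by
          refine Finset.sum_congr rfl fun m _ => ?_
          rw [Finset.mul_sum]
          exact Finset.sum_congr rfl fun σ _ => by ring
        rw [e1, Finset.sum_comm]
        have e2 : ∀ σ : Fin 2, (∑ m, bmix y σ b * (a τ y m * a σ y m))
            = amat y τ σ * bmix y σ b := by
          intro σ
          rw [← Finset.mul_sum, ← hamat]
          ring
        simp_rw [e2]
        exact hP8 y hyV τ b
      simp only [hwdef, mul_add]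
      rw [Finset.sum_add_distrib, h1, h2]
      ring
    have hwa3 : (∑ m, a3 y m * w m) = 0 := by
      have h2 : (∑ m, a3 y m * (∑ σ, bmix y σ b * a σ y m)) = 0 := by
        have e1 : (∑ m, a3 y m * (∑ σ, bmix y σ b * a σ y m))
            = ∑ m, ∑ σ, bmix y σ b * (a3 y m * a σ y m) := by
          refine Finset.sum_congr rfl fun m _ => ?_
          rw [Finset.mul_sum]
          exact Finset.sum_congr rfl fun σ _ => by ring
        rw [e1, Finset.sum_comm]
        have e2 : ∀ σ : Fin 2, (∑ m, bmix y σ b * (a3 y m * a σ y m)) = 0 := by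
          intro σ
          rw [← Finset.mul_sum, hP3 y hyV σ, mul_zero]
        simp_rw [e2]
        simp
      simp only [hwdef, mul_add]
      rw [Finset.sum_add_distrib, hDa3 y hyV b, h2]
      ring
    have hwc : (∑ m, c y m * w m) = 0 := by
      have hcm : ∀ m, c y m = Real.sqrt (Nf y) * a3 y m := by
        intro m
        rw [ha3m]
        field_simp
      calc (∑ m, c y m * w m) = ∑ m, Real.sqrt (Nf y) * (a3 y m * w m) := by
            refine Finset.sum_congr rfl fun m _ => ?_
            rw [hcm m]; ring
        _ = Real.sqrt (Nf y) * ∑ m, a3 y m * w m := by rw [← Finset.mul_sum]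
        _ = 0 := by rw [hwa3, mul_zero]
    have hNney : (a 0 y 1 * a 1 y 2 - a 0 y 2 * a 1 y 1) ^ 2
        + (a 0 y 2 * a 1 y 0 - a 0 y 0 * a 1 y 2) ^ 2
        + (a 0 y 0 * a 1 y 1 - a 0 y 1 * a 1 y 0) ^ 2 ≠ 0 := by
      rw [← hNf y]; exact ne_of_gt hNy
    have hzero := cross_orth_eq_zero (a 0 y) (a 1 y) w
      (by have := hwa 0; rwa [Fin.sum_univ_three] at this)
      (by have := hwa 1; rwa [Fin.sum_univ_three] at this)
      (by have := hwc; rwa [Fin.sum_univ_three, hc0, hc1, hc2] at this)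
      hNney
    intro m
    have := hzero m
    simp only [hwdef] at this
    linarith
  have hGamsym : ∀ τ σ d : Fin 2, Gam2 y τ σ d = Gam2 y τ d σ := by
    intro τ σ d
    rw [hGam2 y τ σ d, hGam2 y τ d σ]
    have hth : ∀ b : Fin 2, a b = fun z => fderiv ℝ θ z (Pi.single b 1) :=
      fun b => funext fun z => ha b z
    have hsymf : fderiv ℝ (a σ) y (Pi.single d 1) = fderiv ℝ (a d) y (Pi.single σ 1) := by
      rw [hth σ, hth d]
      exact fderiv_fderiv_symm (hθ.contDiffAt (hUo.mem_nhds hyU)) (by norm_num) _ _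
    rw [hsymf]
  have hdacon : ∀ τ σ b : Fin 2,
      (∑ m, fderiv ℝ (fun z => acon τ z m) y (Pi.single b 1) * a σ y m) = - Gam2 y τ σ b := by
    intro τ σ b
    have hconst : (fun z => ∑ m, acon τ z m * a σ z m)
        =ᶠ[nhds y] (fun _ => if τ = σ then (1:ℝ) else 0) :=
      Filter.eventuallyEq_of_mem (hVo.mem_nhds hyV) (fun w hw => hP5 w hw τ σ)
    have h0 : fderiv ℝ (fun z => ∑ m, acon τ z m * a σ z m) y (Pi.single b 1) = 0 := by
      rw [hconst.fderiv_eq]; simp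
    have h1 : fderiv ℝ (fun z => ∑ m, acon τ z m * a σ z m) y (Pi.single b 1)
        = ∑ m, (fderiv ℝ (fun z => acon τ z m) y (Pi.single b 1) * a σ y m
            + acon τ y m * Ad σ b m y) :=
      fderiv_sum_mul Finset.univ (fun m z => acon τ z m) (fun m z => a σ z m) y (Pi.single b 1)
        (fun m _ => haconD τ m) (fun m _ => haDm σ m y hyU)
    rw [h1, Finset.sum_add_distrib] at h0
    have h2 : Gam2 y τ σ b = ∑ m, acon τ y m * Ad σ b m y := hGam2c y hyV τ σ b
    linarith
  have hdD3sym : ∀ (m : Fin 3) (b d : Fin 2),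
      fderiv ℝ (fun z => D3c b m z) y (Pi.single d 1)
        = fderiv ℝ (fun z => D3c d m z) y (Pi.single b 1) := by
    intro m b d
    exact fderiv_fderiv_symm ((ha3Cm m).contDiffAt (hVo.mem_nhds hyV)) le_rfl _ _
  have hbmixD : ∀ τ b : Fin 2, DifferentiableAt ℝ (fun z => bmix z τ b) y := by
    intro τ b
    have hev : (fun z => bmix z τ b) =ᶠ[nhds y] (fun z => -∑ m, acon τ z m * D3c b m z) :=
      Filter.eventuallyEq_of_mem (hVo.mem_nhds hyV) (fun w hw => hbmix_eq τ b w hw)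
    rw [hev.differentiableAt_iff]
    exact (DifferentiableAt.fun_sum (fun m _ => (haconD τ m).mul (hD3cD b m))).neg
  have hDbformula : ∀ τ b d : Fin 2,
      fderiv ℝ (fun z => bmix z τ b) y (Pi.single d 1)
        = - ∑ m, (fderiv ℝ (fun z => acon τ z m) y (Pi.single d 1) * D3c b m y
            + acon τ y m * fderiv ℝ (fun z => D3c b m z) y (Pi.single d 1)) := by
    intro τ b d
    have hev : (fun z => bmix z τ b) =ᶠ[nhds y] (fun z => -∑ m, acon τ z m * D3c b m z) :=
      Filter.eventuallyEq_of_mem (hVo.mem_nhds hyV) (fun w hw => hbmix_eq τ b w hw)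
    rw [hev.fderiv_eq]
    have hneg : fderiv ℝ (fun z => -∑ m, acon τ z m * D3c b m z) y
        = - fderiv ℝ (fun z => ∑ m, acon τ z m * D3c b m z) y := fderiv_neg
    rw [hneg, ContinuousLinearMap.neg_apply]
    congr 1
    exact fderiv_sum_mul Finset.univ (fun m z => acon τ z m) (fun m z => D3c b m z) y
      (Pi.single d 1) (fun m _ => haconD τ m) (fun m _ => hD3cD b m)
  have hCodKey : ∀ τ b d : Fin 2,
      fderiv ℝ (fun z => bmix z τ b) y (Pi.single d 1) + (∑ σ, Gam2 y τ d σ * bmix y σ b)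
        = - ∑ m, acon τ y m * fderiv ℝ (fun z => D3c b m z) y (Pi.single d 1) := by
    intro τ b d
    rw [hDbformula τ b d, Finset.sum_add_distrib]
    have h1 : (∑ m, fderiv ℝ (fun z => acon τ z m) y (Pi.single d 1) * D3c b m y)
        = ∑ σ, Gam2 y τ d σ * bmix y σ b := by
      have e1 : (∑ m, fderiv ℝ (fun z => acon τ z m) y (Pi.single d 1) * D3c b m y)
          = ∑ m, ∑ σ, -(bmix y σ b)
              * (fderiv ℝ (fun z => acon τ z m) y (Pi.single d 1) * a σ y m) := by
        refine Finset.sum_congr rfl fun m _ => ?_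
        rw [hWein b m, mul_neg, Finset.mul_sum, ← Finset.sum_neg_distrib]
        refine Finset.sum_congr rfl fun σ _ => by ring
      rw [e1, Finset.sum_comm]
      have e2 : ∀ σ : Fin 2, (∑ m, -(bmix y σ b)
          * (fderiv ℝ (fun z => acon τ z m) y (Pi.single d 1) * a σ y m))
          = Gam2 y τ σ d * bmix y σ b := by
        intro σ
        rw [← Finset.mul_sum, hdacon τ σ d]
        ring
      simp_rw [e2]
      exact Finset.sum_congr rfl fun σ _ => by rw [hGamsym τ σ d]
    rw [h1]
    ring
  have hCod : ∀ τ : Fin 2,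
      fderiv ℝ (fun z => bmix z τ β) y (Pi.single α 1) + (∑ σ, Gam2 y τ α σ * bmix y σ β)
        = fderiv ℝ (fun z => bmix z τ α) y (Pi.single β 1)
          + (∑ σ, Gam2 y τ β σ * bmix y σ α) := by
    intro τ
    rw [hCodKey τ β α, hCodKey τ α β]
    congr 1
    exact Finset.sum_congr rfl fun m _ => by rw [hdD3sym m β α]
  -- ### Section 6 : derivatives of the displacement fields
  have hηhω : ∀ σ : Fin 2, ContDiffOn ℝ 2 (ηh σ) ω := fun σ => (hηh σ).mono subset_closure
  have hη3ω : ContDiffOn ℝ 2 η3 ω := hη3.mono subset_closure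
  have hηhD : ∀ σ : Fin 2, DifferentiableAt ℝ (ηh σ) y := fun σ =>
    ((hηhω σ).differentiableOn two_ne_zero).differentiableAt (hωo.mem_nhds hy)
  have hdη3D : DifferentiableAt ℝ (fderiv ℝ η3) y := by
    have h1 : ContDiffOn ℝ 1 (fderiv ℝ η3) ω := hη3ω.fderiv_of_isOpen hωo (by norm_num)
    exact (h1.differentiableOn one_ne_zero).differentiableAt (hωo.mem_nhds hy)
  have hdη3Dm : ∀ γ2 : Fin 2, DifferentiableAt ℝ (fun z => fderiv ℝ η3 z (Pi.single γ2 1)) y :=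
    fun γ2 => hdη3D.clm_apply (differentiableAt_const _)
  have hHsym : fderiv ℝ (fun z => fderiv ℝ η3 z (Pi.single β 1)) y (Pi.single α 1)
      = fderiv ℝ (fun z => fderiv ℝ η3 z (Pi.single α 1)) y (Pi.single β 1) :=
    fderiv_fderiv_symm (hη3ω.contDiffAt (hωo.mem_nhds hy)) le_rfl _ _
  have hθveq : ∀ γ2 : Fin 2, θv γ2 = fun z => fderiv ℝ η3 z (Pi.single γ2 1)
      + 2 * ∑ σ, bmix z σ γ2 * ηh σ z := fun γ2 => funext fun z => hθv γ2 z
  have hsumD : ∀ γ2 : Fin 2, DifferentiableAt ℝ (fun z => ∑ σ, bmix z σ γ2 * ηh σ z) y :=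
    fun γ2 => DifferentiableAt.fun_sum (fun σ _ => (hbmixD σ γ2).mul (hηhD σ))
  have hθvD : ∀ γ2 : Fin 2, DifferentiableAt ℝ (θv γ2) y := by
    intro γ2
    rw [hθveq γ2]
    exact (hdη3Dm γ2).add ((differentiableAt_const 2).mul (hsumD γ2))
  have hθvder : ∀ γ2 δ2 : Fin 2, fderiv ℝ (θv γ2) y (Pi.single δ2 1)
      = fderiv ℝ (fun z => fderiv ℝ η3 z (Pi.single γ2 1)) y (Pi.single δ2 1)
      + 2 * ∑ σ, (fderiv ℝ (fun z => bmix z σ γ2) y (Pi.single δ2 1) * ηh σ y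
          + bmix y σ γ2 * fderiv ℝ (ηh σ) y (Pi.single δ2 1)) := by
    intro γ2 δ2
    rw [hθveq γ2]
    rw [fderiv_fun_add (hdη3Dm γ2) ((differentiableAt_const 2).fun_mul (hsumD γ2))]
    rw [ContinuousLinearMap.add_apply]
    congr 1
    rw [fderiv_const_mul (hsumD γ2) 2]
    rw [ContinuousLinearMap.smul_apply, smul_eq_mul]
    congr 1
    exact fderiv_sum_mul Finset.univ (fun σ z => bmix z σ γ2) (fun σ z => ηh σ z) y
      (Pi.single δ2 1) (fun σ _ => hbmixD σ γ2) (fun σ _ => hηhD σ)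
  have hvheq : ∀ γ2 : Fin 2, vh ε x₃ γ2 = fun z => ηh γ2 z - ε * x₃ * θv γ2 z :=
    fun γ2 => funext fun z => hvh ε x₃ γ2 z
  have hvhder : ∀ γ2 δ2 : Fin 2, fderiv ℝ (vh ε x₃ γ2) y (Pi.single δ2 1)
      = fderiv ℝ (ηh γ2) y (Pi.single δ2 1) - ε * x₃ * fderiv ℝ (θv γ2) y (Pi.single δ2 1) := by
    intro γ2 δ2
    rw [hvheq γ2]
    rw [fderiv_fun_sub (hηhD γ2) ((differentiableAt_const (ε * x₃)).fun_mul (hθvD γ2))]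
    rw [ContinuousLinearMap.sub_apply]
    congr 1
    rw [fderiv_const_mul (hθvD γ2) (ε * x₃), ContinuousLinearMap.smul_apply, smul_eq_mul]
  -- ### Section 7 : final algebra
  have hγeq : 1 / 2 * (fderiv ℝ (ηh α) y (Pi.single β 1) + fderiv ℝ (ηh β) y (Pi.single α 1))
      - (Gam2 y 0 α β * ηh 0 y + Gam2 y 1 α β * ηh 1 y) - bcov y α β * η3 y = 0 := by
    have h := hγ0 y hy α β
    rw [hγη y α β, Fin.sum_univ_two] at h
    exact h
  have hγveq : γv ε x₃ y α β = ε * (-x₃ * (1 / 2 * (fderiv ℝ (θv α) y (Pi.single β 1)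
      + fderiv ℝ (θv β) y (Pi.single α 1)) - ∑ σ, Gam2 y σ α β * θv σ y)) := by
    rw [hγv ε x₃ y α β, hvhder α β, hvhder β α]
    simp only [Fin.sum_univ_two, hvh]
    linear_combination hγeq
  have h1e : 1 / ε * γv ε x₃ y α β = -x₃ * (1 / 2 * (fderiv ℝ (θv α) y (Pi.single β 1)
      + fderiv ℝ (θv β) y (Pi.single α 1)) - ∑ σ, Gam2 y σ α β * θv σ y) := by
    rw [hγveq]
    field_simp
  have hCod' : ∀ τ : Fin 2,
      fderiv ℝ (fun z => bmix z τ β) y (Pi.single α 1)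
        + (Gam2 y τ α 0 * bmix y 0 β + Gam2 y τ α 1 * bmix y 1 β)
      = fderiv ℝ (fun z => bmix z τ α) y (Pi.single β 1)
        + (Gam2 y τ β 0 * bmix y 0 α + Gam2 y τ β 1 * bmix y 1 α) := by
    intro τ
    have h := hCod τ
    rw [Fin.sum_univ_two, Fin.sum_univ_two] at h
    exact h
  rw [h1e, hρη y α β, hθvder α β, hθvder β α]
  simp only [hbder, hvh, hθv, Fin.sum_univ_two]
  linear_combination x₃ * ηh 0 y * hCod' 0 + x₃ * ηh 1 y * hCod' 1 + x₃ / 2 * hHsym
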